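/- A triple (A,B,C) of skew-adjoint ℝ-linear endomorphisms of ℍ belongs to the triality algebra Tri ℍ (i.e. A(x*y) = x*(B y) + (C x)*y for all x,y ∈ ℍ) if and only if there exist pure imaginary quaternions a₁, a₂, b₁ such that A = L_{a₁} + R_{a₂}, B = L_{b₁} + R_{a₂} and C = L_{a₁} − R_{b₁}; moreover a₁, a₂, b₁ are uniquely determined by (A,B,C). In particular, Tri ℍ is a 9-dimensional real Lie algebra. -/

import Mathlib

open Quaternion

noncomputable section StatementTwoAux

private def qmk (a b c d : ℝ) : ℍ[ℝ] := ⟨a,b,c,d⟩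
@[simp] private lemma qmk_re (a b c d : ℝ) : (qmk a b c d).re = a := rfl
@[simp] private lemma qmk_imI (a b c d : ℝ) : (qmk a b c d).imI = b := rfl
@[simp] private lemma qmk_imJ (a b c d : ℝ) : (qmk a b c d).imJ = c := rfl
@[simp] private lemma qmk_imK (a b c d : ℝ) : (qmk a b c d).imK = d := rfl

private def qi : ℍ[ℝ] := qmk 0 1 0 0
private def qj : ℍ[ℝ] := qmk 0 0 1 0
private def qk : ℍ[ℝ] := qmk 0 0 0 1

attribute [local simp] Quaternion.re_mul Quaternion.imI_mul Quaternion.imJ_mul Quaternion.imK_mul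

private lemma qdecomp (z : ℍ[ℝ]) : z = (z.re : ℝ) • 1 + z.imI • qi + z.imJ • qj + z.imK • qk := by
  ext <;> simp [qi,qj,qk]

private lemma pure_central (p : ℍ[ℝ]) (hp : p.re = 0) (h : ∀ z : ℍ[ℝ], p * z = z * p) : p = 0 := by
  have h1 := h qi
  have h2 := h qj
  rw [Quaternion.ext_iff] at h1 h2
  simp [qi, qj] at h1 h2
  obtain ⟨e1,e2⟩ := h1; obtain ⟨e3,e4⟩ := h2
  ext <;> simp [hp] <;> linarith

private lemma deriv_inner (D : ℍ[ℝ] →ₗ[ℝ] ℍ[ℝ]) (hD : ∀ x y, D (x*y) = x * D y + D x * y) :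
    ∃ d : ℍ[ℝ], d.re = 0 ∧ ∀ z, D z = d * z - z * d := by
  have h1 : D 1 = 0 := by have := hD 1 1; simpa using this
  have hii : qi * qi = -1 := by ext <;> simp [qi]
  have hjj : qj * qj = -1 := by ext <;> simp [qj]
  have hkk : qk * qk = -1 := by ext <;> simp [qk]
  have hij : qi * qj = qk := by ext <;> simp [qi, qj, qk]
  have hneg : D (-1 : ℍ[ℝ]) = 0 := by rw [map_neg, h1, neg_zero]
  have hDi : qi * D qi + D qi * qi = 0 := by
    have h' := hD qi qi; rw [hii, hneg] at h'; exact h'.symm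
  have hDj : qj * D qj + D qj * qj = 0 := by
    have h' := hD qj qj; rw [hjj, hneg] at h'; exact h'.symm
  have hDk : qk * D qk + D qk * qk = 0 := by
    have h' := hD qk qk; rw [hkk, hneg] at h'; exact h'.symm
  have hk : D qk = qi * D qj + D qi * qj := by rw [← hij, hD qi qj]
  rw [Quaternion.ext_iff] at hDi hDj hDk
  simp [qi, qj, qk] at hDi hDj hDk
  set p := (D qi).imJ with hp
  set q := (D qi).imK with hq
  set s := (D qj).imK with hs
  have hDi' : D qi = qmk 0 0 p q := by
    ext
    · exact hDi.2
    · exact hDi.1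
    · rfl
    · rfl
  have hrel : (D qj).imI = -p := by
    have h2 : (D qk).re = 0 := hDk.2
    rw [hk] at h2
    simp [qi, qj] at h2
    have h2' : -(D qj).imI + -(D qi).imJ = 0 := h2
    linarith
  have hDj' : D qj = qmk 0 (-p) 0 s := by
    ext
    · exact hDj.2
    · exact hrel
    · exact hDj.1
    · rfl
  have hDk' : D qk = qmk 0 (-q) (-s) 0 := by
    rw [hk, hDi', hDj']
    ext <;> simp [qi, qj]
  refine ⟨qmk 0 (s/2) (-q/2) (p/2), rfl, fun z => ?_⟩
  conv_lhs => rw [qdecomp z]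
  simp only [map_add, map_smul, h1, hDi', hDj', hDk', smul_zero]
  ext <;> simp <;> ring

end StatementTwoAux

/-- An ℝ-linear endomorphism of the quaternions is skew-adjoint for the real inner
product `⟪p,q⟫ = Re (p * conj q)`. -/
def SkewH (A : ℍ[ℝ] →ₗ[ℝ] ℍ[ℝ]) : Prop :=
  ∀ p q : ℍ[ℝ], (A p * star q).re + (p * star (A q)).re = 0

/-- A triple `(A,B,C)` of skew-adjoint real-linear endomorphisms of ℍ satisfies the
triality identity `A (x*y) = x * (B y) + (C x) * y` iff there are unique pure imaginary
quaternions `a₁, a₂, b₁` with `A = L_{a₁} + R_{a₂}`, `B = L_{b₁} + R_{a₂}` and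
`C = L_{a₁} - R_{b₁}`.  (In particular `Tri ℍ` is parametrised by `(ℍ')³`, so it is a
9-dimensional real Lie algebra.) -/
theorem statement2 (A B C : ℍ[ℝ] →ₗ[ℝ] ℍ[ℝ])
    (hA : SkewH A) (hB : SkewH B) (hC : SkewH C) :
    (∀ x y : ℍ[ℝ], A (x * y) = x * B y + C x * y) ↔
      ∃! t : ℍ[ℝ] × ℍ[ℝ] × ℍ[ℝ],
        t.1.re = 0 ∧ t.2.1.re = 0 ∧ t.2.2.re = 0 ∧
        (∀ z : ℍ[ℝ], A z = t.1 * z + z * t.2.1) ∧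
        (∀ z : ℍ[ℝ], B z = t.2.2 * z + z * t.2.1) ∧
        (∀ z : ℍ[ℝ], C z = t.1 * z - z * t.2.2) := by
  constructor
  · intro h
    have hb1 : (B 1).re = 0 := by have := hB 1 1; simp at this; linarith
    have hc1 : (C 1).re = 0 := by have := hC 1 1; simp at this; linarith
    have hBdef : ∀ y, B y = A y - C 1 * y := by
      intro y
      have := h 1 y
      simp only [one_mul] at this
      rw [this]; noncomm_ring
    have hCdef : ∀ x, C x = A x - x * B 1 := by
      intro x
      have := h x 1
      simp only [mul_one] at this
      rw [this]; noncomm_ring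
    set D : ℍ[ℝ] →ₗ[ℝ] ℍ[ℝ] :=
      A - LinearMap.mulLeft ℝ (C 1) - LinearMap.mulRight ℝ (B 1) with hDdef
    have hDz : ∀ z, D z = A z - C 1 * z - z * B 1 := by
      intro z
      simp [hDdef, LinearMap.mulLeft_apply, LinearMap.mulRight_apply]
    have hder : ∀ x y, D (x * y) = x * D y + D x * y := by
      intro x y
      rw [hDz, hDz, hDz, h x y, hBdef y, hCdef x]
      noncomm_ring
    obtain ⟨d, hdre, hdz⟩ := deriv_inner D hder
    have hAz : ∀ z, A z = (C 1 + d) * z + z * (B 1 - d) := by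
      intro z
      have e := hdz z
      rw [hDz] at e
      rw [sub_sub, sub_eq_iff_eq_add] at e
      rw [e]; noncomm_ring
    have hBz : ∀ z, B z = d * z + z * (B 1 - d) := by
      intro z
      rw [hBdef z, hAz z]; noncomm_ring
    have hCz : ∀ z, C z = (C 1 + d) * z - z * d := by
      intro z
      rw [hCdef z, hAz z]; noncomm_ring
    refine ⟨(C 1 + d, B 1 - d, d), ⟨?_, ?_, hdre, hAz, hBz, hCz⟩, ?_⟩
    · simp [hc1, hdre]
    · simp [hb1, hdre]
    · rintro ⟨a₁', a₂', b'⟩ ⟨h1re, h2re, h3re, hA', hB', hC'⟩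
      dsimp only at h1re h2re h3re hA' hB' hC'
      have hpz : ∀ z, (a₁' - (C 1 + d)) * z = z * ((B 1 - d) - a₂') := by
        intro z
        rw [sub_mul, mul_sub, sub_eq_sub_iff_add_eq_add, ← hA' z, hAz z]
        abel
      have hp1 : a₁' - (C 1 + d) = (B 1 - d) - a₂' := by
        have := hpz 1; simpa using this
      have hcentral : ∀ z : ℍ[ℝ], (a₁' - (C 1 + d)) * z = z * (a₁' - (C 1 + d)) := by
        intro z; rw [hpz z, ← hp1]
      have hpre : (a₁' - (C 1 + d)).re = 0 := by
        simp [h1re, hc1, hdre]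
      have hzero := pure_central _ hpre hcentral
      have ha1 : a₁' = C 1 + d := by rwa [sub_eq_zero] at hzero
      have ha2 : a₂' = B 1 - d := by
        rw [hzero] at hp1
        have h' : B 1 - d = a₂' := by
          have := hp1.symm
          rwa [sub_eq_zero] at this
        exact h'.symm
      have hb' : b' = d := by
        have e1 := hC' 1
        rw [hCz 1, ha1] at e1
        simp only [mul_one] at e1
        have h2 := sub_right_injective e1
        simp only [one_mul] at h2
        first | exact h2 | exact h2.symm
      simp only [Prod.mk.injEq]
      exact ⟨ha1, ha2, hb'⟩
  · rintro ⟨t, ⟨_, _, _, hA', hB', hC'⟩, _⟩ x y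
    rw [hA', hB' y, hC' x]
    noncomm_ring
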